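/- Let J be a 2-torsion free Jordan ring with nontrivial idempotent e satisfying conditions (i)–(iii), and φ : J → J' a bijective n-multiplicative isomorphism onto a Jordan ring J'. Then φ is additive on J₁: φ(a + b) = φ(a) + φ(b) for all a, b ∈ J₁. -/

import Mathlib

/-- Peirce 1-component relative to `e`: elements `x` with `e*x = x`. -/
def peirce1 {J : Type*} [Mul J] (e : J) : Set J := {x | e * x = x}

/-- Peirce 1/2-component relative to `e`: elements `x` with `e*x = (1/2)x`, i.e. `e*x + e*x = x`. -/
def peirceHalf {J : Type*} [Mul J] [Add J] (e : J) : Set J := {x | e * x + e * x = x}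

/-- Peirce 0-component relative to `e`: elements `x` with `e*x = 0`. -/
def peirce0 {J : Type*} [Mul J] [Zero J] (e : J) : Set J := {x | e * x = 0}

/-- The right-normed nonassociative monomial `x₁(x₂(⋯(x_{n-1}x_n)⋯))` on a list of arguments. -/
def rnm {J : Type*} [Mul J] [Zero J] : List J → J
  | [] => 0
  | [x] => x
  | x :: y :: l => x * rnm (y :: l)

/-- `φ` is an `n`-multiplicative map (w.r.t. the right-normed monomial of degree `n`). -/
def IsNMulMap {J J' : Type*} [Mul J] [Zero J] [Mul J'] [Zero J'] (n : ℕ) (φ : J → J') : Prop :=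
  ∀ l : List J, l.length = n → φ (rnm l) = rnm (l.map φ)

section Aux
variable {R : Type*} [NonUnitalNonAssocCommRing R]

private theorem two_cancel (h2 : ∀ x : R, x + x = 0 → x = 0)
    {x y : R} (h : x + x = y + y) : x = y := by
  have hz : (x - y) + (x - y) = 0 := by
    have h' : (x - y) + (x - y) = (x + x) - (y + y) := by abel
    rw [h', h, sub_self]
  exact sub_eq_zero.mp (h2 _ hz)

variable {e : R} (hJ : ∀ x y : R, ((x * x) * y) * x = (x * x) * (y * x))
  (hid : e * e = e) (h2 : ∀ x : R, x + x = 0 → x = 0)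

include hJ hid h2 in
private theorem jA1 (y z : R) :
    ((e*z)*y)*e + ((e*z)*y)*e + (e*y)*z = (e*z)*(y*e) + (e*z)*(y*e) + e*(y*z) := by
  have h1 := hJ (e + z) y
  have h3 := hJ (e - z) y
  have h4 := hJ z y
  apply two_cancel h2
  simp only [add_mul, mul_add, sub_mul, mul_sub, hid, mul_comm] at h1 h3 h4 ⊢
  linear_combination (norm := abel1) h1 - h3 - h4 - h4

include hJ hid h2 in
private theorem jOP (z : R) :
    e*(e*(e*z)) + e*(e*(e*z)) + e*z = e*(e*z) + e*(e*z) + e*(e*z) := by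
  have h := jA1 hJ hid h2 e z
  simp only [hid, mul_comm] at h ⊢
  linear_combination (norm := abel1) h

include hJ hid h2 in
private theorem jE1 {a : R} (ha : e * a = a) (y : R) : e * (a * y) = a * (e * y) := by
  have h := jA1 hJ hid h2 y a
  rw [ha] at h
  simp only [mul_comm] at h ⊢
  linear_combination (norm := abel1) h

include hJ hid h2 in
private theorem jE0 {w : R} (hw : e * w = 0) (y : R) : e * (y * w) = (e * y) * w := by
  have h := jA1 hJ hid h2 y w
  rw [hw] at h
  simp only [zero_mul, mul_zero, zero_add, add_zero, mul_comm] at h ⊢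
  linear_combination (norm := abel1) -h

-- closure facts
include hJ hid h2 in
private theorem jF5 {a b : R} (ha : e*a = a) (hb : e*b = b) : e*(a*b) = a*b := by
  rw [jE1 hJ hid h2 ha b, hb]

include hJ hid h2 in
private theorem jF4 {a t : R} (ha : e*a = a) (ht : e*t + e*t = t) :
    e*(a*t) + e*(a*t) = a*t := by
  rw [jE1 hJ hid h2 ha t, ← mul_add, ht]

include hJ hid h2 in
private theorem jF1 {a w : R} (ha : e*a = a) (hw : e*w = 0) : a * w = 0 := by
  have h1 : e*(a*w) = a*w := by rw [jE0 hJ hid h2 hw a, ha]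
  have h2' : e*(a*w) = 0 := by rw [jE1 hJ hid h2 ha w, hw, mul_zero]
  rw [← h1, h2']

include hJ hid h2 in
private theorem jF2 {w w' : R} (hw : e*w = 0) (hw' : e*w' = 0) : e*(w*w') = 0 := by
  rw [mul_comm w w', jE0 hJ hid h2 hw w', hw', zero_mul]

include hJ hid h2 in
private theorem jF3 {w t : R} (hw : e*w = 0) (ht : e*t + e*t = t) :
    e*(w*t) + e*(w*t) = w*t := by
  rw [mul_comm w t, jE0 hJ hid h2 hw t, ← add_mul, ht]

-- Jh closed under L
private theorem jJhL {t : R} (ht : e*t + e*t = t) : e*(e*t) + e*(e*t) = e*t := by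
  rw [← mul_add, ht]

include hJ hid h2 in
private theorem jHlem {t : R} (ht : e*t + e*t = t) (s : R) :
    (e*s)*t = (e*t)*(e*s) + (e*t)*(e*s) := by
  have h := jA1 hJ hid h2 s t
  have k : ((e*t)*s)*e + ((e*t)*s)*e = e*(s*t) := by
    rw [← add_mul, ← add_mul, ht, mul_comm (t*s) e, mul_comm t s]
  simp only [mul_comm] at h k ⊢
  linear_combination (norm := abel1) h - k

include hJ hid h2 in
private theorem jJlem {t : R} (ht : e*t + e*t = t) : e*(e*(t*t)) = e*(t*t) := by
  have h1 := hJ (e + t) e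
  have h3 := hJ (e - t) e
  have k2 := jHlem hJ hid h2 ht t
  have k3 : ((e*t)*e)*t + ((e*t)*e)*t = (e*t)*t := by
    rw [mul_comm (e*t) e, ← add_mul, jJhL ht]
  apply two_cancel h2
  simp only [add_mul, mul_add, sub_mul, mul_sub, hid, mul_comm] at h1 h3 k2 k3 ⊢
  linear_combination (norm := abel1) h1 + h3 - k3 - k3 - k2 - k2

include hJ hid h2 in
private theorem jF6 {s t : R} (hs : e*s + e*s = s) (ht : e*t + e*t = t) :
    e*(e*(s*t)) = e*(s*t) := by
  have hst : e*(s+t) + e*(s+t) = s + t := by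
    rw [mul_add]; rw [show e*s + e*t + (e*s + e*t) = (e*s + e*s) + (e*t + e*t) from by abel,
      hs, ht]
  have h1 := jJlem hJ hid h2 hst
  have h2' := jJlem hJ hid h2 hs
  have h3 := jJlem hJ hid h2 ht
  apply two_cancel h2
  simp only [add_mul, mul_add, mul_comm] at h1 h2' h3 ⊢
  linear_combination (norm := abel1) h1 - h2' - h3

-- iterate lemmas
private theorem iterL_add (e : R) (k : ℕ) (x y : R) :
    (fun z => e * z)^[k] (x + y) = (fun z => e * z)^[k] x + (fun z => e * z)^[k] y := by
  induction k generalizing x y with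
  | zero => rfl
  | succ k ih =>
    rw [Function.iterate_succ_apply, Function.iterate_succ_apply, Function.iterate_succ_apply]
    show (fun z => e * z)^[k] (e * (x + y)) = _
    rw [mul_add]
    exact ih _ _

private theorem iterL_sub (e : R) (k : ℕ) (x y : R) :
    (fun z => e * z)^[k] (x - y) = (fun z => e * z)^[k] x - (fun z => e * z)^[k] y := by
  induction k generalizing x y with
  | zero => rfl
  | succ k ih =>
    rw [Function.iterate_succ_apply, Function.iterate_succ_apply, Function.iterate_succ_apply]
    show (fun z => e * z)^[k] (e * (x - y)) = _
    rw [mul_sub]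
    exact ih _ _

private theorem iterL_zero (e : R) (k : ℕ) : (fun z => e * z)^[k] (0 : R) = 0 := by
  induction k with
  | zero => rfl
  | succ k ih => rw [Function.iterate_succ_apply]; show (fun z => e * z)^[k] (e * 0) = 0
                 rw [mul_zero]; exact ih

private theorem iterL_fix {e a : R} (ha : e * a = a) (k : ℕ) :
    (fun z => e * z)^[k] a = a := by
  induction k with
  | zero => rfl
  | succ k ih => rw [Function.iterate_succ_apply]; show (fun z => e * z)^[k] (e * a) = a
                 rw [ha]; exact ih

private theorem iterL_kill {e w : R} (hw : e * w = 0) {k : ℕ} (hk : 1 ≤ k) :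
    (fun z => e * z)^[k] w = 0 := by
  obtain ⟨j, rfl⟩ := Nat.exists_eq_add_of_le hk
  rw [Nat.add_comm, Function.iterate_succ_apply]
  show (fun z => e * z)^[j] (e * w) = 0
  rw [hw]; exact iterL_zero e j

private theorem iterL_Jh {e t : R} (ht : e*t + e*t = t) (k : ℕ) :
    e * ((fun z => e * z)^[k] t) + e * ((fun z => e * z)^[k] t) = (fun z => e * z)^[k] t := by
  induction k with
  | zero => exact ht
  | succ k ih =>
    rw [Function.iterate_succ_apply']
    show e * (e * _) + e * (e * _) = e * _
    rw [← mul_add, ih]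

private theorem jJh_zero {e t : R} (ht : e*t + e*t = t) (h : e * t = 0) : t = 0 := by
  rw [← ht, h, add_zero]

private theorem iterL_Jh_zero {e t : R} (ht : e*t + e*t = t) (k : ℕ)
    (h : (fun z => e * z)^[k] t = 0) : t = 0 := by
  induction k generalizing t with
  | zero => exact h
  | succ k ih =>
    rw [Function.iterate_succ_apply] at h
    have h' : (fun z => e * z)^[k] (e * t) = 0 := h
    have het : e*(e*t) + e*(e*t) = e*t := jJhL ht
    exact jJh_zero ht (ih het h')

private theorem iterL_Jh_pre {e t : R} (ht : e*t + e*t = t) (k : ℕ) :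
    ∃ s, (e*s + e*s = s) ∧ (fun z => e * z)^[k] s = t := by
  induction k with
  | zero => exact ⟨t, ht, rfl⟩
  | succ k ih =>
    obtain ⟨s, hs, hks⟩ := ih
    refine ⟨s + s, ?_, ?_⟩
    · rw [mul_add]
      rw [show e*s + e*s + (e*s + e*s) = (e*s + e*s) + (e*s + e*s) from rfl, hs]
    · rw [Function.iterate_succ_apply]
      show (fun z => e * z)^[k] (e * (s + s)) = t
      rw [mul_add, hs]
      exact hks

-- independence lemmas
private theorem jIndep_h0 {e S T : R} (hS : e*S + e*S = S) (hT : e*T = 0)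
    (h : S + T = 0) : S = 0 ∧ T = 0 := by
  have h1 : e*S + e*T = 0 := by rw [← mul_add, h, mul_zero]
  rw [hT, add_zero] at h1
  have hS0 : S = 0 := by rw [← hS, h1, add_zero]
  exact ⟨hS0, by rw [← h, hS0, zero_add]⟩

private theorem jIndep_1h {e S T : R} (hS : e*S = S) (hT : e*T + e*T = T)
    (h : S + T = 0) : S = 0 ∧ T = 0 := by
  have h1 : e*S + e*T = 0 := by rw [← mul_add, h, mul_zero]
  rw [hS] at h1
  -- S + e*T = 0 and S + T = 0 so T = e*T, then T + T = T... 
  have h2' : T = e * T := by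
    have := sub_eq_zero.mpr (h1.trans h.symm)  -- (S + e*T) - (S + T) = 0
    have h3 : e*T - T = 0 := by
      calc e*T - T = (S + e*T) - (S + T) := by abel
        _ = 0 := by rw [h1, h, sub_zero]
    exact (sub_eq_zero.mp h3).symm
  have hT0 : T = 0 := by
    have hTT := hT
    rw [h2'.symm] at hTT
    exact add_eq_right.mp hTT
  exact ⟨by rw [← h, hT0, add_zero], hT0⟩

-- decomposition
include hJ hid h2 in
private theorem jdecomp (c : R) :
    ∃ c1 ch c0 : R, (e*c1 = c1) ∧ (e*ch + e*ch = ch) ∧ (e*c0 = 0) ∧ c = c1 + ch + c0 := by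
  have op := jOP hJ hid h2 c
  refine ⟨(e*(e*c) + e*(e*c)) - e*c,
          ((e*c - e*(e*c)) + (e*c - e*(e*c))) + ((e*c - e*(e*c)) + (e*c - e*(e*c))),
          c - (e*c + e*c + e*c) + (e*(e*c) + e*(e*c)), ?_, ?_, ?_, by abel⟩
  · simp only [mul_add, mul_sub]
    linear_combination (norm := abel1) op
  · simp only [mul_add, mul_sub]
    linear_combination (norm := abel1) -op - op - op - op
  · simp only [mul_add, mul_sub]
    linear_combination (norm := abel1) op


-- L^k decomposition
private theorem jLk_decomp {e c1 ch c0 : R} (hc1 : e*c1 = c1) (hc0 : e*c0 = 0)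
    {k : ℕ} (hk : 1 ≤ k) :
    (fun z => e * z)^[k] (c1 + ch + c0) = c1 + (fun z => e * z)^[k] ch := by
  obtain ⟨j, rfl⟩ := Nat.exists_eq_add_of_le hk
  induction j with
  | zero =>
    show e * (c1 + ch + c0) = c1 + e * ch
    rw [mul_add, mul_add, hc1, hc0, add_zero]
  | succ j ih =>
    rw [show 1 + (j+1) = (1 + j) + 1 from by omega, Function.iterate_succ_apply',
      Function.iterate_succ_apply' (n := 1 + j), ih (by omega)]
    show e * (c1 + _) = c1 + e * _
    rw [mul_add, hc1]

private theorem jSemiJ1 {e X : R} (h : e*(e*X) = e*X) (k : ℕ) :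
    e*(e*((fun z => e * z)^[k] X)) = e*((fun z => e * z)^[k] X) := by
  induction k generalizing X with
  | zero => exact h
  | succ k ih =>
    rw [Function.iterate_succ_apply]
    exact ih (X := e*X) (congrArg (fun z => e*z) h)

private theorem jJh_sub {e x y : R} (hx : e*x + e*x = x) (hy : e*y + e*y = y) :
    e*(x - y) + e*(x - y) = x - y := by
  rw [mul_sub, show e*x - e*y + (e*x - e*y) = (e*x + e*x) - (e*y + e*y) from by abel, hx, hy]

private theorem jJh_add {e x y : R} (hx : e*x + e*x = x) (hy : e*y + e*y = y) :
    e*(x + y) + e*(x + y) = x + y := by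
  rw [mul_add, show e*x + e*y + (e*x + e*y) = (e*x + e*x) + (e*y + e*y) from by abel, hx, hy]

-- rnm and foldr
private theorem rnm_cons (x : R) (l : List R) (h : l ≠ []) : rnm (x :: l) = x * rnm l := by
  cases l with
  | nil => exact absurd rfl h
  | cons y t => rfl

private theorem rnm_app (q : List R) (x : R) : rnm (q ++ [x]) = q.foldr (· * ·) x := by
  induction q with
  | nil => rfl
  | cons p q ih =>
    rw [List.cons_append, rnm_cons _ _ (by simp), ih, List.foldr_cons]

private theorem foldr_add' (q : List R) (x y : R) :
    q.foldr (· * ·) (x + y) = q.foldr (· * ·) x + q.foldr (· * ·) y := by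
  induction q with
  | nil => rfl
  | cons p q ih => simp only [List.foldr_cons, ih, mul_add]

private theorem foldr_zero' (q : List R) : q.foldr (· * ·) (0 : R) = 0 := by
  induction q with
  | nil => rfl
  | cons p q ih => simp only [List.foldr_cons, ih, mul_zero]

private theorem foldr_repl (k : ℕ) (c x : R) :
    (List.replicate k c).foldr (· * ·) x = (fun y => c * y)^[k] x := by
  induction k with
  | zero => rfl
  | succ k ih => rw [List.replicate_succ, List.foldr_cons, ih, Function.iterate_succ_apply']

include hJ hid h2 in
private theorem foldr_kill {a : R} (ha : e*a = a) :
    ∀ q : List R, q ≠ [] → (∀ x ∈ q, e*x = 0) → q.foldr (· * ·) a = 0 := by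
  intro q
  induction q with
  | nil => intro h; exact absurd rfl h
  | cons u q ih =>
    intro _ hall
    cases q with
    | nil =>
      show u * a = 0
      rw [mul_comm]
      exact jF1 hJ hid h2 ha (hall u (by simp))
    | cons v q' =>
      show u * ((v :: q').foldr (· * ·) a) = 0
      rw [ih (by simp) (fun x hx => hall x (List.mem_cons_of_mem _ hx)), mul_zero]

end Aux

section Phi
variable {J J' : Type*} [NonUnitalNonAssocCommRing J] [NonUnitalNonAssocCommRing J']
variable {e : J} {n : ℕ} {φ : J → J'}

private theorem frame (hmul : IsNMulMap n φ) {c a b : J}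
    (h : φ c = φ a + φ b) (q : List J) (hq : q.length + 1 = n) :
    φ (q.foldr (· * ·) c) = φ (q.foldr (· * ·) a) + φ (q.foldr (· * ·) b) := by
  have len : ∀ x : J, (q ++ [x]).length = n := by intro x; simp [hq]
  have h1 := hmul (q ++ [c]) (len c)
  have h2 := hmul (q ++ [a]) (len a)
  have h3 := hmul (q ++ [b]) (len b)
  rw [rnm_app] at h1 h2 h3
  rw [List.map_append] at h1 h2 h3
  simp only [List.map_cons, List.map_nil] at h1 h2 h3
  rw [rnm_app] at h1 h2 h3
  rw [h, foldr_add'] at h1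
  rw [h1, ← h2, ← h3]

private theorem phi_zero (hn : 2 ≤ n) (hsurj : Function.Surjective φ)
    (hmul : IsNMulMap n φ) : φ 0 = 0 := by
  obtain ⟨z, hz⟩ := hsurj 0
  have h := hmul (List.replicate (n-1) 0 ++ [z]) (by simp; omega)
  rw [rnm_app, List.map_append, List.map_replicate, List.map_cons, List.map_nil,
    rnm_app, hz] at h
  rw [foldr_zero'] at h
  have hl : (List.replicate (n-1) (0:J)).foldr (· * ·) z = 0 := by
    obtain ⟨j, hj⟩ : ∃ j, n - 1 = j + 1 := ⟨n - 2, by omega⟩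
    rw [hj, List.replicate_succ, List.foldr_cons, zero_mul]
  rw [hl] at h
  exact h

variable (hJ : ∀ x y : J, ((x * x) * y) * x = (x * x) * (y * x))
  (hid : e * e = e) (h2 : ∀ x : J, x + x = 0 → x = 0)

include hJ hid h2 in
private theorem killJ0 (hcond2 : ∀ a ∈ peirce0 e, (∀ t ∈ peirce0 e, t * a = 0) → a = 0) :
    ∀ m : ℕ, 1 ≤ m → ∀ w : J, e * w = 0 →
    (∀ q : List J, q.length = m → (∀ x ∈ q, e * x = 0) → q.foldr (· * ·) w = 0) → w = 0 := by
  intro m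
  induction m with
  | zero => omega
  | succ m ih =>
    intro _ w hw hq
    rcases Nat.eq_zero_or_pos m with hm | hm
    · subst hm
      refine hcond2 w hw (fun t ht => ?_)
      exact hq [t] rfl (by have ht' : e * t = 0 := ht; simpa using ht')
    · refine hcond2 w hw (fun t ht => ?_)
      refine ih hm (t * w) (jF2 hJ hid h2 ht hw) (fun q hlen hall => ?_)
      have := hq (q ++ [t]) (by simp [hlen]) (by
        intro x hx
        rcases List.mem_append.mp hx with h | h
        · exact hall x h
        · simpa using (by simpa using h : x = t) ▸ ht)
      rwa [List.foldr_append, List.foldr_cons, List.foldr_nil] at this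

include hJ hid h2 in
private theorem iterL_semi {Z : J} (hZ : e*(e*Z) = e*Z) {k : ℕ} (hk : 1 ≤ k) :
    (fun z => e*z)^[k] Z = e*Z := by
  obtain ⟨j, rfl⟩ := Nat.exists_eq_add_of_le hk
  rw [Nat.add_comm, Function.iterate_succ_apply]
  exact iterL_fix hZ j

include hJ hid h2 in
private theorem jKpp (hcond3 : ∀ a ∈ peirceHalf e, (∀ t ∈ peirce0 e, t * a = 0) → a = 0)
    (hn : 2 ≤ n) (hinj : Function.Injective φ) (hmul : IsNMulMap n φ) (hphi0 : φ 0 = 0)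
    {A D Z : J} (hA : e*A + e*A = A) (hD : e*D + e*D = D) (hZ : e*(e*Z) = e*Z)
    (h : φ (A + D + Z) = φ A + φ Z) : D = 0 := by
  have hf1 := frame hmul h (List.replicate (n-1) e) (by simp; omega)
  rw [foldr_repl, foldr_repl, foldr_repl] at hf1
  have hZ1 : (fun z => e*z)^[n-1] Z = e*Z := iterL_semi hJ hid h2 hZ (by omega)
  have hC : (fun z => e*z)^[n-1] (A + D + Z)
      = (fun z => e*z)^[n-1] A + (fun z => e*z)^[n-1] D + e*Z := by
    rw [iterL_add, iterL_add, hZ1]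
  rw [hZ1, hC] at hf1
  set A' := (fun z => e*z)^[n-1] A with hA'def
  set D' := (fun z => e*z)^[n-1] D with hD'def
  have hA' : e*A' + e*A' = A' := iterL_Jh hA (n-1)
  have hD' : e*D' + e*D' = D' := iterL_Jh hD (n-1)
  have key : ∀ u ∈ peirce0 e, u * ((fun z => e*z)^[n-2] D') = 0 := by
    intro u hu
    have hu' : e * u = 0 := hu
    have hf2 := frame hmul hf1 (u :: List.replicate (n-2) e) (by simp; omega)
    simp only [List.foldr_cons, foldr_repl] at hf2
    have hup : u * (e*Z) = 0 := by
      rw [mul_comm]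
      exact jF1 hJ hid h2 hZ hu'
    rw [iterL_add, iterL_add, iterL_fix hZ] at hf2
    rw [mul_add, mul_add, hup, add_zero, hphi0, add_zero] at hf2
    have := hinj hf2
    exact add_eq_left.mp this
  have hD'' : e * ((fun z => e*z)^[n-2] D') + e * ((fun z => e*z)^[n-2] D')
      = (fun z => e*z)^[n-2] D' := iterL_Jh hD' (n-2)
  have hz := hcond3 _ hD'' key
  exact iterL_Jh_zero hD (n-1) (iterL_Jh_zero hD' (n-2) hz)

include hJ hid h2 in
private theorem jH1
    (hcond1 : ∀ a ∈ peirce1 e, (∀ t ∈ peirceHalf e, t * a = 0) → a = 0)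
    (hcond2 : ∀ a ∈ peirce0 e, (∀ t ∈ peirce0 e, t * a = 0) → a = 0)
    (hcond3 : ∀ a ∈ peirceHalf e, (∀ t ∈ peirce0 e, t * a = 0) → a = 0)
    (hn : 2 ≤ n) (hbij : Function.Bijective φ) (hmul : IsNMulMap n φ)
    {a m : J} (ha : e*a = a) (hm : e*m + e*m = m) : φ (a + m) = φ a + φ m := by
  have hinj := hbij.injective
  have hphi0 : φ 0 = 0 := phi_zero hn hbij.surjective hmul
  obtain ⟨c, hc⟩ := hbij.surjective (φ a + φ m)
  obtain ⟨c1, ch, c0, hc1, hch, hc0, hdec⟩ := jdecomp hJ hid h2 c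
  have step1 : ∀ u, e*u = 0 → u * ((fun z => e*z)^[n-2] c) = u * ((fun z => e*z)^[n-2] m) := by
    intro u hu
    have hf := frame hmul hc (u :: List.replicate (n-2) e) (by simp; omega)
    simp only [List.foldr_cons, foldr_repl] at hf
    have hua : u * ((fun z => e*z)^[n-2] a) = 0 := by
      rw [iterL_fix ha, mul_comm]; exact jF1 hJ hid h2 ha hu
    rw [hua, hphi0, zero_add] at hf
    exact hinj hf
  have hkey : ch = m ∧ c0 = 0 := by
    rcases Nat.lt_or_ge n 3 with h3 | h3
    · have hn2 : n = 2 := by omega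
      subst hn2
      simp only [show (2:ℕ) - 2 = 0 from rfl, Function.iterate_zero_apply] at step1
      have hcomp : ∀ u, e*u = 0 → u*(ch - m) = 0 ∧ u*c0 = 0 := by
        intro u hu
        have huc1 : u * c1 = 0 := by rw [mul_comm]; exact jF1 hJ hid h2 hc1 hu
        have hsum : u*(ch - m) + u*c0 = 0 := by
          have hrw : u*(ch - m) + u*c0 = u*c - u*m := by
            rw [hdec, mul_add, mul_add, huc1, mul_sub]; abel
          rw [hrw, step1 u hu, sub_self]
        exact jIndep_h0 (jF3 hJ hid h2 hu (jJh_sub hch hm)) (jF2 hJ hid h2 hu hc0) hsum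
      have hchm : ch = m := by
        have := hcond3 (ch - m) (jJh_sub hch hm) (fun t ht => (hcomp t ht).1)
        exact sub_eq_zero.mp this
      exact ⟨hchm, hcond2 c0 hc0 (fun t ht => (hcomp t ht).2)⟩
    · have hk1 : 1 ≤ n - 2 := by omega
      have hchm : ch = m := by
        have hLc : (fun z => e*z)^[n-2] c = c1 + (fun z => e*z)^[n-2] ch := by
          rw [hdec]; exact jLk_decomp hc1 hc0 hk1
        have hdiff : ∀ u, e*u = 0 → u * ((fun z => e*z)^[n-2] (ch - m)) = 0 := by
          intro u hu
          have h := step1 u hu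
          rw [hLc, mul_add, show u * c1 = 0 from by rw [mul_comm]; exact jF1 hJ hid h2 hc1 hu,
            zero_add] at h
          rw [iterL_sub, mul_sub, h, sub_self]
        have := hcond3 _ (iterL_Jh (jJh_sub hch hm) (n-2)) hdiff
        exact sub_eq_zero.mp (iterL_Jh_zero (jJh_sub hch hm) (n-2) this)
      have hall : ∀ q : List J, q.length = n-1 → (∀ x ∈ q, e*x = 0) →
          q.foldr (· * ·) c0 = 0 := by
        intro q hlen hq0s
        have hne : q ≠ [] := by
          intro hq; rw [hq] at hlen; simp at hlen; omega
        have hf := frame hmul hc q (by omega)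
        rw [foldr_kill hJ hid h2 ha q hne hq0s, hphi0, zero_add] at hf
        have heq := hinj hf
        have hce : c = c1 + m + c0 := by rw [hdec, hchm]
        rw [hce, foldr_add', foldr_add',
          foldr_kill hJ hid h2 hc1 q hne hq0s, zero_add] at heq
        exact add_eq_left.mp heq
      exact ⟨hchm, killJ0 hJ hid h2 hcond2 (n-1) (by omega) c0 hc0 hall⟩
  obtain ⟨hchm, hc00⟩ := hkey
  have hcm : c = c1 + m := by rw [hdec, hchm, hc00, add_zero]
  have hc1a : c1 = a := by
    have hta : ∀ t, e*t + e*t = t → t * (c1 - a) = 0 := by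
      intro t ht
      have hf := frame hmul hc (t :: List.replicate (n-2) e) (by simp; omega)
      simp only [List.foldr_cons, foldr_repl] at hf
      rw [iterL_fix ha] at hf
      set μ := (fun z => e*z)^[n-2] m with hμdef
      have hμ : e*μ + e*μ = μ := iterL_Jh hm _
      have hLc : (fun z => e*z)^[n-2] c = c1 + μ := by
        rw [hcm, iterL_add, iterL_fix hc1]
      rw [hLc] at hf
      have hf6 : e*(e*(t*μ)) = e*(t*μ) := jF6 hJ hid h2 ht hμ
      have harg : t * (c1 + μ) = t*a + t*(c1 - a) + t*μ := by
        rw [mul_add, mul_sub]; abel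
      rw [harg] at hf
      have hAJh : e*(t*a) + e*(t*a) = t*a := by
        rw [mul_comm t a]; exact jF4 hJ hid h2 ha ht
      have hDJh : e*(t*(c1-a)) + e*(t*(c1-a)) = t*(c1-a) := by
        rw [mul_comm t (c1-a)]
        exact jF4 hJ hid h2 (by rw [mul_sub, hc1, ha]) ht
      exact jKpp hJ hid h2 hcond3 hn hinj hmul hphi0 hAJh hDJh hf6 hf
    have := hcond1 (c1 - a) (show e*(c1-a) = c1-a from by rw [mul_sub, hc1, ha])
      (fun t ht => hta t ht)
    exact sub_eq_zero.mp this
  have hfin : c = a + m := by rw [hcm, hc1a]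
  rw [← hfin, hc]

include hJ hid h2 in
private theorem jH0
    (hcond1' : ∀ a ∈ peirce0 e, (∀ t ∈ peirceHalf e, t * a = 0) → a = 0)
    (hcond3 : ∀ a ∈ peirceHalf e, (∀ t ∈ peirce0 e, t * a = 0) → a = 0)
    (hn : 2 ≤ n) (hbij : Function.Bijective φ) (hmul : IsNMulMap n φ)
    {w m : J} (hw : e*w = 0) (hm : e*m + e*m = m) : φ (w + m) = φ w + φ m := by
  have hinj := hbij.injective
  have hphi0 : φ 0 = 0 := phi_zero hn hbij.surjective hmul
  obtain ⟨c, hc⟩ := hbij.surjective (φ w + φ m)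
  obtain ⟨c1, ch, c0, hc1, hch, hc0, hdec⟩ := jdecomp hJ hid h2 c
  have hf := frame hmul hc (List.replicate (n-1) e) (by simp; omega)
  rw [foldr_repl, foldr_repl, foldr_repl, iterL_kill hw (by omega), hphi0, zero_add] at hf
  have heq := hinj hf
  rw [hdec, jLk_decomp hc1 hc0 (by omega)] at heq
  have h0 : c1 + ((fun z => e*z)^[n-1] (ch - m)) = 0 := by
    rw [iterL_sub, show c1 + ((fun z => e*z)^[n-1] ch - (fun z => e*z)^[n-1] m)
      = (c1 + (fun z => e*z)^[n-1] ch) - (fun z => e*z)^[n-1] m from by abel, heq, sub_self]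
  obtain ⟨hc10, hchm0⟩ := jIndep_1h hc1 (iterL_Jh (jJh_sub hch hm) (n-1)) h0
  have hchm : ch = m := sub_eq_zero.mp (iterL_Jh_zero (jJh_sub hch hm) (n-1) hchm0)
  have hc0w : c0 = w := by
    have hta : ∀ t, e*t + e*t = t → t * (c0 - w) = 0 := by
      intro t ht
      have hf2 := frame hmul hc (List.replicate (n-2) e ++ [t]) (by simp; omega)
      rw [List.foldr_append, List.foldr_append, List.foldr_append] at hf2
      simp only [List.foldr_cons, List.foldr_nil, foldr_repl] at hf2
      have hcm : c = m + (w + (c0 - w)) := by rw [hdec, hc10, hchm]; abel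
      have hf6 : e*(e*((fun z => e*z)^[n-2] (t*m))) = e*((fun z => e*z)^[n-2] (t*m)) :=
        jSemiJ1 (jF6 hJ hid h2 ht hm) (n-2)
      have hd0 : e*(c0 - w) = 0 := by rw [mul_sub, hc0, hw, sub_self]
      have hAJh : e*((fun z => e*z)^[n-2] (t*w)) + e*((fun z => e*z)^[n-2] (t*w))
          = (fun z => e*z)^[n-2] (t*w) := by
        refine iterL_Jh ?_ _
        rw [mul_comm t w]; exact jF3 hJ hid h2 hw ht
      have hDJh : e*((fun z => e*z)^[n-2] (t*(c0-w))) + e*((fun z => e*z)^[n-2] (t*(c0-w)))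
          = (fun z => e*z)^[n-2] (t*(c0-w)) := by
        refine iterL_Jh ?_ _
        rw [mul_comm t (c0-w)]
        exact jF3 hJ hid h2 hd0 ht
      have harg : (fun z => e*z)^[n-2] (t*c)
          = (fun z => e*z)^[n-2] (t*w) + (fun z => e*z)^[n-2] (t*(c0-w))
            + (fun z => e*z)^[n-2] (t*m) := by
        rw [hcm, mul_add, mul_add, iterL_add, iterL_add]
        abel
      rw [harg] at hf2
      have hD := jKpp hJ hid h2 hcond3 hn hinj hmul hphi0 hAJh hDJh hf6 hf2
      exact iterL_Jh_zero (t := t*(c0-w)) (by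
        rw [mul_comm t (c0-w)]
        exact jF3 hJ hid h2 hd0 ht) (n-2) hD
    have := hcond1' (c0 - w) (show e*(c0-w) = 0 from by rw [mul_sub, hc0, hw, sub_self])
      (fun t ht => hta t ht)
    exact sub_eq_zero.mp this
  have hcfin : c = w + m := by rw [hdec, hc10, hchm, hc0w]; abel
  rw [← hcfin, hc]

end Phi


theorem nMulIso_additive_on_one {J J' : Type*} [NonUnitalNonAssocCommRing J] [NonUnitalNonAssocCommRing J']
    (hJordan : ∀ x y : J, ((x * x) * y) * x = (x * x) * (y * x))
    (hJordan' : ∀ x y : J', ((x * x) * y) * x = (x * x) * (y * x))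
    (h2 : ∀ x : J, x + x = 0 → x = 0)
    (e : J) (hid : e * e = e) (hne : e ≠ 0) (hnu : ∃ x : J, e * x ≠ x)
    (hcond1 : ∀ a ∈ peirce1 e, (∀ t ∈ peirceHalf e, t * a = 0) → a = 0)
    (hcond1' : ∀ a ∈ peirce0 e, (∀ t ∈ peirceHalf e, t * a = 0) → a = 0)
    (hcond2 : ∀ a ∈ peirce0 e, (∀ t ∈ peirce0 e, t * a = 0) → a = 0)
    (hcond3 : ∀ a ∈ peirceHalf e, (∀ t ∈ peirce0 e, t * a = 0) → a = 0)
    (n : ℕ) (hn : 2 ≤ n) (φ : J → J')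
    (hbij : Function.Bijective φ) (hmul : IsNMulMap n φ) :
    ∀ a ∈ peirce1 e, ∀ b ∈ peirce1 e,
      φ (a + b) = φ a + φ b := by
  intro a ha0 b hb0
  have ha : e * a = a := ha0
  have hb : e * b = b := hb0
  have hinj := hbij.injective
  have hphi0 : φ 0 = 0 := phi_zero hn hbij.surjective hmul
  obtain ⟨c, hc⟩ := hbij.surjective (φ a + φ b)
  obtain ⟨c1, ch, c0, hc1, hch, hc0, hdec⟩ := jdecomp hJordan hid h2 c
  -- step 1 : u * L^[n-2] c = 0 for u ∈ J0
  have step1 : ∀ u, e*u = 0 → u * ((fun z => e*z)^[n-2] c) = 0 := by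
    intro u hu
    have hf := frame hmul hc (u :: List.replicate (n-2) e) (by simp; omega)
    simp only [List.foldr_cons, foldr_repl] at hf
    rw [iterL_fix ha, iterL_fix hb,
      show u * a = 0 from by rw [mul_comm]; exact jF1 hJordan hid h2 ha hu,
      show u * b = 0 from by rw [mul_comm]; exact jF1 hJordan hid h2 hb hu,
      hphi0, add_zero] at hf
    exact hinj (hf.trans hphi0.symm)
  -- components of c vanish
  have hkey : ch = 0 ∧ c0 = 0 := by
    rcases Nat.lt_or_ge n 3 with h3 | h3
    · have hn2 : n = 2 := by omega
      subst hn2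
      simp only [show (2:ℕ) - 2 = 0 from rfl, Function.iterate_zero_apply] at step1
      have hcomp : ∀ u, e*u = 0 → u*ch = 0 ∧ u*c0 = 0 := by
        intro u hu
        have huc1 : u * c1 = 0 := by rw [mul_comm]; exact jF1 hJordan hid h2 hc1 hu
        have hsum : u*ch + u*c0 = 0 := by
          have hrw : u*ch + u*c0 = u*c := by
            rw [hdec, mul_add, mul_add, huc1, zero_add]
          rw [hrw, step1 u hu]
        exact jIndep_h0 (jF3 hJordan hid h2 hu hch) (jF2 hJordan hid h2 hu hc0) hsum
      exact ⟨hcond3 ch hch (fun t ht => (hcomp t ht).1),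
        hcond2 c0 hc0 (fun t ht => (hcomp t ht).2)⟩
    · have hk1 : 1 ≤ n - 2 := by omega
      have hch0 : ch = 0 := by
        have hLc : (fun z => e*z)^[n-2] c = c1 + (fun z => e*z)^[n-2] ch := by
          rw [hdec]; exact jLk_decomp hc1 hc0 hk1
        have hdiff : ∀ u, e*u = 0 → u * ((fun z => e*z)^[n-2] ch) = 0 := by
          intro u hu
          have h := step1 u hu
          rwa [hLc, mul_add, show u * c1 = 0 from by
            rw [mul_comm]; exact jF1 hJordan hid h2 hc1 hu, zero_add] at h
        have := hcond3 _ (iterL_Jh hch (n-2)) hdiff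
        exact iterL_Jh_zero hch (n-2) this
      have hall : ∀ q : List J, q.length = n-1 → (∀ x ∈ q, e*x = 0) →
          q.foldr (· * ·) c0 = 0 := by
        intro q hlen hq0s
        have hne' : q ≠ [] := by
          intro hq; rw [hq] at hlen; simp at hlen; omega
        have hf := frame hmul hc q (by omega)
        rw [foldr_kill hJordan hid h2 ha q hne' hq0s,
          foldr_kill hJordan hid h2 hb q hne' hq0s, hphi0, add_zero] at hf
        have heq := hinj (hf.trans hphi0.symm)
        have hce : c = c1 + c0 := by rw [hdec, hch0, add_zero]
        rw [hce, foldr_add', foldr_kill hJordan hid h2 hc1 q hne' hq0s, zero_add] at heq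
        exact heq
      exact ⟨hch0, killJ0 hJordan hid h2 hcond2 (n-1) (by omega) c0 hc0 hall⟩
  obtain ⟨hch0, hc00⟩ := hkey
  have hceq : c = c1 := by rw [hdec, hch0, hc00, add_zero, add_zero]
  have hcJ1 : e * c = c := by rw [hceq]; exact hc1
  -- step 3 : φ (u * (t * c)) = φ (u * (t * a)) + φ (u * (t * b))
  have step3 : ∀ t u : J, φ (u * (t * c)) = φ (u * (t * a)) + φ (u * (t * b)) := by
    intro t u
    rcases Nat.lt_or_ge n 3 with h3 | h3
    · have hn2 : n = 2 := by omega
      have hf1 := frame hmul hc [t] (by simp [hn2])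
      simp only [List.foldr_cons, List.foldr_nil] at hf1
      have hf2 := frame hmul hf1 [u] (by simp [hn2])
      simpa only [List.foldr_cons, List.foldr_nil] using hf2
    · have hf := frame hmul hc (u :: t :: List.replicate (n-3) e) (by simp; omega)
      simp only [List.foldr_cons, foldr_repl] at hf
      rwa [iterL_fix ha, iterL_fix hb, iterL_fix hcJ1] at hf
  -- step 4 : pair additivity
  have step4 : ∀ t u : J, (e*t + e*t = t) → (e*u = 0) →
      φ (u*(t*a) + u*(t*b)) = φ (u*(t*a)) + φ (u*(t*b)) := by
    intro t u ht hu
    have hphita : φ (t + a) = φ t + φ a := by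
      rw [add_comm t a, jH1 hJordan hid h2 hcond1 hcond2 hcond3 hn hbij hmul ha ht,
        add_comm (φ a) (φ t)]
    have htt6 : e*(e*(t*t)) = e*(t*t) := jF6 hJordan hid h2 ht ht
    have huab : u * (a*b) = 0 := by
      rw [mul_comm]
      exact jF1 hJordan hid h2 (jF5 hJordan hid h2 ha hb) hu
    have hE : φ (u*(t*t) + u*(t*b) + u*(a*t))
        = φ (u*(t*t)) + φ (u*(t*b)) + φ (u*(a*t)) := by
      rcases Nat.lt_or_ge n 3 with h3 | h3
      · have hn2 : n = 2 := by omega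
        have hbin : ∀ x y : J, φ (x * y) = φ x * φ y := by
          intro x y
          exact hmul [x, y] (by simp [hn2])
        have hphitb : φ (t + b) = φ t + φ b := by
          rw [add_comm t b, jH1 hJordan hid h2 hcond1 hcond2 hcond3 hn hbij hmul hb ht,
            add_comm (φ b) (φ t)]
        have hexp : (t+a)*(t+b) = t*t + t*b + (a*t + a*b) := by
          rw [add_mul, mul_add, mul_add]
        have hJside : u * ((t+a)*(t+b)) = u*(t*t) + u*(t*b) + u*(a*t) := by
          rw [hexp, mul_add, mul_add, mul_add, huab, add_zero]
        have hsum' : φ ((t+a)*(t+b)) = φ (t*t) + φ (t*b) + (φ (a*t) + φ (a*b)) := by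
          rw [hbin (t+a) (t+b), hphita, hphitb, add_mul, mul_add, mul_add,
            ← hbin t t, ← hbin t b, ← hbin a t, ← hbin a b]
        have hcalc : φ (u * ((t+a)*(t+b)))
            = φ (u*(t*t)) + φ (u*(t*b)) + φ (u*(a*t)) := by
          rw [hbin u ((t+a)*(t+b)), hsum', mul_add, mul_add, mul_add,
            ← hbin u (t*t), ← hbin u (t*b), ← hbin u (a*t), ← hbin u (a*b),
            huab, hphi0, add_zero]
        rw [← hJside, hcalc]
      · obtain ⟨s, hs, hLs⟩ := iterL_Jh_pre ht (n-3)
        have hphisb : φ (s + b) = φ s + φ b := by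
          rw [add_comm s b, jH1 hJordan hid h2 hcond1 hcond2 hcond3 hn hbij hmul hb hs,
            add_comm (φ b) (φ s)]
        have hterm : ∀ x y : J,
            φ u * (φ x * ((fun z => φ e * z)^[n-3] (φ y)))
            = φ (u * (x * ((fun z => e*z)^[n-3] y))) := by
          intro x y
          have h := hmul ((u :: x :: List.replicate (n-3) e) ++ [y]) (by simp; omega)
          rw [rnm_app, List.map_append, List.map_cons, List.map_cons, List.map_replicate,
            List.map_cons, List.map_nil, rnm_app] at h
          simp only [List.foldr_cons, foldr_repl] at h
          exact h.symm
        have h := hmul ((u :: (t+a) :: List.replicate (n-3) e) ++ [s+b]) (by simp; omega)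
        rw [rnm_app, List.map_append, List.map_cons, List.map_cons, List.map_replicate,
          List.map_cons, List.map_nil, rnm_app] at h
        simp only [List.foldr_cons, foldr_repl] at h
        rw [iterL_add, hLs, iterL_fix hb] at h
        have hexp : (t+a)*(t+b) = t*t + t*b + (a*t + a*b) := by
          rw [add_mul, mul_add, mul_add]
        have hJside : u * ((t+a)*(t+b)) = u*(t*t) + u*(t*b) + u*(a*t) := by
          rw [hexp, mul_add, mul_add, mul_add, huab, add_zero]
        rw [hJside] at h
        rw [hphita, hphisb, iterL_add] at h
        rw [add_mul, mul_add, mul_add] at h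
        rw [mul_add, mul_add, mul_add] at h
        rw [hterm t s, hterm t b, hterm a s, hterm a b] at h
        rw [hLs, iterL_fix hb, huab, hphi0, add_zero] at h
        rw [h]
    -- H0 split
    have hz0 : e * (u*(t*t)) = 0 := by
      have h1 : u * (e*(t*t)) = 0 := by
        rw [mul_comm]; exact jF1 hJordan hid h2 htt6 hu
      have hsplit : u * (t*t - e*(t*t)) = u * (t*t) := by
        rw [mul_sub, h1, sub_zero]
      rw [← hsplit]
      exact jF2 hJordan hid h2 hu (by rw [mul_sub, htt6, sub_self])
    have hMJh : e*(u*(t*b) + u*(a*t)) + e*(u*(t*b) + u*(a*t)) = u*(t*b) + u*(a*t) := by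
      refine jJh_add ?_ ?_
      · exact jF3 hJordan hid h2 hu (by rw [mul_comm t b]; exact jF4 hJordan hid h2 hb ht)
      · exact jF3 hJordan hid h2 hu (jF4 hJordan hid h2 ha ht)
    have hH0 := jH0 hJordan hid h2 hcond1' hcond3 hn hbij hmul hz0 hMJh
    have hE' : φ (u*(t*t) + (u*(t*b) + u*(a*t)))
        = φ (u*(t*t)) + (φ (u*(t*b)) + φ (u*(a*t))) := by
      rw [← add_assoc, hE]; abel
    rw [hH0] at hE'
    have hpair : φ (u*(t*b) + u*(a*t)) = φ (u*(t*b)) + φ (u*(a*t)) :=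
      add_left_cancel hE'
    rw [show u*(t*a) + u*(t*b) = u*(t*b) + u*(a*t) from by rw [mul_comm a t]; abel,
      hpair, mul_comm a t, add_comm]
  -- final
  have hd : e * (c - a - b) = c - a - b := by rw [mul_sub, mul_sub, hcJ1, ha, hb]
  have hdz : c - a - b = 0 := by
    refine hcond1 (c - a - b) hd (fun t ht => ?_)
    have ht' : e*t + e*t = t := ht
    have hu0 : ∀ u, e*u = 0 → u * (t * (c - a - b)) = 0 := by
      intro u hu
      have h := (step3 t u).trans (step4 t u ht' hu).symm
      have heq := hinj h
      rw [mul_sub, mul_sub, mul_sub, mul_sub]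
      rw [show u * (t*c) = u*(t*a) + u*(t*b) from heq]
      abel
    have htd : e*(t * (c - a - b)) + e*(t * (c - a - b)) = t * (c - a - b) := by
      rw [mul_comm t (c - a - b)]
      exact jF4 hJordan hid h2 hd ht'
    exact hcond3 _ htd (fun u hu => hu0 u hu)
  have hcab : c = a + b := by
    have : c - (a + b) = 0 := by rw [← hdz]; abel
    exact sub_eq_zero.mp this
  rw [← hcab, hc]
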